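/- Let p be a prime, a ≠ b two distinct letters, and α, β positive integers. The element a^α − b^β of (ℤ/pℤ)⟨A⟩ is primitive for the unshuffle coproduct if and only if α and β are both powers of p. -/

import Mathlib

open TensorProduct

/-- The unshuffle coproduct on the monoid algebra of the free monoid (= `K⟨A⟩`):
the unique algebra morphism (for the concatenation product) sending each letter `a`
to `a ⊗ 1 + 1 ⊗ a`. -/
noncomputable def unshuffle (K A : Type*) [CommSemiring K] :
    MonoidAlgebra K (FreeMonoid A) →ₐ[K]
      MonoidAlgebra K (FreeMonoid A) ⊗[K] MonoidAlgebra K (FreeMonoid A) :=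
  MonoidAlgebra.lift K _ (FreeMonoid A)
    (FreeMonoid.lift fun a =>
      (MonoidAlgebra.of K (FreeMonoid A) (FreeMonoid.of a)) ⊗ₜ[K] 1
        + 1 ⊗ₜ[K] (MonoidAlgebra.of K (FreeMonoid A) (FreeMonoid.of a)))

/-- The word `l` viewed as an element of `K⟨A⟩`. -/
noncomputable def wd {K : Type*} {A : Type*} [CommSemiring K] (l : List A) :
    MonoidAlgebra K (FreeMonoid A) :=
  MonoidAlgebra.of K (FreeMonoid A) (FreeMonoid.ofList l)

/-- `P` is primitive for the unshuffle coproduct: `c(P) = P ⊗ 1 + 1 ⊗ P`. -/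
def IsPrimitive {K A : Type*} [CommSemiring K] (P : MonoidAlgebra K (FreeMonoid A)) : Prop :=
  unshuffle K A P = P ⊗ₜ[K] 1 + 1 ⊗ₜ[K] P

/- ### number theory -/

open Polynomial in
lemma choose_vanish_iff_pow {p : ℕ} (hp : p.Prime) (n : ℕ) (hn : 0 < n) :
    (∀ i, 0 < i → i < n → p ∣ n.choose i) ↔ ∃ m, n = p ^ m := by
  constructor
  · intro h
    set k := n.factorization p with hk
    set m := n / p ^ k with hm
    have hmdvd : p ^ k ∣ n := Nat.ordProj_dvd n p
    have hnm : n = p ^ k * m := (Nat.mul_div_cancel' hmdvd).symm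
    have hpm : ¬ p ∣ m := Nat.not_dvd_ordCompl hp hn.ne'
    have hm1 : 0 < m := Nat.ordCompl_pos p hn.ne'
    rcases eq_or_lt_of_le (Nat.one_le_iff_ne_zero.mpr hm1.ne') with h1 | h2
    · exact ⟨k, by simp [hnm, ← h1]⟩
    · exfalso
      haveI : Fact p.Prime := ⟨hp⟩
      have hq : 0 < p ^ k := Nat.pow_pos (n := k) hp.pos
      have hqn : p ^ k < n := by
        rw [hnm]; nlinarith
      have hdvd := h (p ^ k) hq hqn
      have hcast : (n.choose (p ^ k) : ZMod p) = 0 := by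
        exact_mod_cast (ZMod.natCast_eq_zero_iff _ _).2 hdvd
      have hpoly : ((X : (ZMod p)[X]) + 1) ^ n = (X ^ p ^ k + 1) ^ m := by
        rw [hnm, pow_mul, add_pow_char_pow]
        simp
      have hc1 : (((X : (ZMod p)[X]) + 1) ^ n).coeff (p ^ k) = (n.choose (p ^ k) : ZMod p) :=
        coeff_X_add_one_pow _ n _
      have hc2 : (((X : (ZMod p)[X]) ^ p ^ k + 1) ^ m).coeff (p ^ k) = (m : ZMod p) := by
        rw [add_pow]
        simp only [one_pow, mul_one, ← pow_mul, finset_sum_coeff, coeff_mul_natCast,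
          coeff_X_pow]
        rw [Finset.sum_eq_single 1]
        · simp
        · intro j hj hj1
          have : ¬ p ^ k = p ^ k * j := by
            rcases Nat.eq_zero_or_pos j with rfl | hjp
            · simpa using hq.ne'
            · have h2j : 2 ≤ j := by omega
              nlinarith
          simp [this]
        · intro h; exact absurd (Finset.mem_range.2 (by omega)) h
      have : (m : ZMod p) = 0 := by rw [← hc2, ← hpoly, hc1, hcast]
      exact hpm ((ZMod.natCast_eq_zero_iff _ _).1 this)
  · rintro ⟨m, rfl⟩ i h0 hlt
    exact Nat.Prime.dvd_choose_pow hp h0.ne' hlt.ne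

/- ### free monoid helpers -/

lemma rep_len_eq {A : Type*} {c d : A} {k i : ℕ}
    (h : FreeMonoid.ofList (List.replicate k c) = FreeMonoid.ofList (List.replicate i d)) :
    k = i := by
  have h' : List.replicate k c = List.replicate i d := FreeMonoid.ofList.injective h
  simpa using congrArg List.length h'

lemma rep_letter_eq {A : Type*} {c d : A} {k i : ℕ} (hk : 0 < k)
    (h : FreeMonoid.ofList (List.replicate k c) = FreeMonoid.ofList (List.replicate i d)) :
    c = d := by
  have h' : List.replicate k c = List.replicate i d := FreeMonoid.ofList.injective h
  exact List.eq_of_mem_replicate (h' ▸ List.mem_replicate.2 ⟨hk.ne', rfl⟩)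

lemma rep_ne_one {A : Type*} {c : A} {k : ℕ} (hk : 0 < k) :
    FreeMonoid.ofList ([] : List A) ≠ FreeMonoid.ofList (List.replicate k c) := by
  intro h
  have h2 : FreeMonoid.ofList (List.replicate 0 c) = FreeMonoid.ofList (List.replicate k c) := by
    simpa using h
  have := rep_len_eq h2
  omega

/- ### algebra helpers -/

section Alg
variable {K A : Type*} [CommSemiring K]

lemma freeMonoid_of_pow (c : A) (n : ℕ) :
    (FreeMonoid.of c) ^ n = FreeMonoid.ofList (List.replicate n c) := by
  induction n with
  | zero => rfl
  | succ n ih => rw [pow_succ', ih, List.replicate_succ, FreeMonoid.ofList_cons]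

lemma wd_replicate (c : A) (n : ℕ) :
    wd (K := K) (List.replicate n c) = (wd [c]) ^ n := by
  rw [wd, wd, ← freeMonoid_of_pow, FreeMonoid.ofList_singleton, ← map_pow]

lemma wd_nil : wd (K := K) ([] : List A) = 1 := by
  rw [wd, FreeMonoid.ofList_nil, map_one]

lemma unshuffle_letter (c : A) :
    unshuffle K A (wd [c]) = wd [c] ⊗ₜ[K] 1 + 1 ⊗ₜ[K] wd [c] := by
  rw [wd, FreeMonoid.ofList_singleton, unshuffle, MonoidAlgebra.lift_of, FreeMonoid.lift_eval_of]

lemma unshuffle_replicate (c : A) (n : ℕ) :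
    unshuffle K A (wd (K := K) (List.replicate n c)) =
      ∑ k ∈ Finset.range (n + 1),
        (n.choose k) • (wd (K := K) (List.replicate k c) ⊗ₜ[K] wd (List.replicate (n - k) c)) := by
  rw [wd_replicate, map_pow, unshuffle_letter]
  have hcomm : Commute (wd (K := K) [c] ⊗ₜ[K] 1) (1 ⊗ₜ[K] wd (K := K) [c]) := by
    show _ = _
    rw [Algebra.TensorProduct.tmul_mul_tmul, Algebra.TensorProduct.tmul_mul_tmul,
      one_mul, mul_one]
  rw [hcomm.add_pow]
  refine Finset.sum_congr rfl fun k hk => ?_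
  rw [Algebra.TensorProduct.tmul_pow, Algebra.TensorProduct.tmul_pow,
    Algebra.TensorProduct.tmul_mul_tmul, one_pow, one_pow, mul_one, one_mul,
    wd_replicate, wd_replicate, nsmul_eq_mul']

noncomputable def coeff2 (K : Type*) {A : Type*} [CommSemiring K] (w w' : FreeMonoid A) :
    MonoidAlgebra K (FreeMonoid A) ⊗[K] MonoidAlgebra K (FreeMonoid A) →ₗ[K] K :=
  (Finsupp.lapply (w, w')).comp ((finsuppTensorFinsupp' K (FreeMonoid A) (FreeMonoid A)).toLinearMap.comp
    (TensorProduct.map (MonoidAlgebra.coeffLinearEquiv K).toLinearMap (MonoidAlgebra.coeffLinearEquiv K).toLinearMap))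

open scoped Classical in
lemma coeff2_wd (w w' : FreeMonoid A) (l l' : List A) :
    coeff2 K w w' (wd l ⊗ₜ[K] wd l') =
      (if FreeMonoid.ofList l = w then (1:K) else 0) *
        (if FreeMonoid.ofList l' = w' then (1:K) else 0) := by
  have hl : wd (K := K) l = MonoidAlgebra.single (FreeMonoid.ofList l) 1 := rfl
  have hl' : wd (K := K) l' = MonoidAlgebra.single (FreeMonoid.ofList l') 1 := rfl
  have hc : ∀ m : FreeMonoid A, MonoidAlgebra.coeffLinearEquiv K (MonoidAlgebra.single m (1:K)) = Finsupp.single m 1 := fun _ => rfl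
  rw [hl, hl']
  simp only [coeff2, LinearMap.coe_comp, Function.comp_apply, LinearEquiv.coe_coe,
    Finsupp.lapply_apply, TensorProduct.map_tmul, hc]
  erw [finsuppTensorFinsupp'_single_tmul_single]
  rw [mul_one, Finsupp.single_apply]
  simp only [Prod.ext_iff, ite_and]
  split_ifs <;> simp_all

lemma unshuffle_replicate_of_vanish (c : A) {n : ℕ} (hn : 0 < n)
    (h : ∀ i, 0 < i → i < n → (n.choose i : K) = 0) :
    unshuffle K A (wd (K := K) (List.replicate n c)) =
      wd (K := K) (List.replicate n c) ⊗ₜ[K] 1 + 1 ⊗ₜ[K] wd (List.replicate n c) := by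
  obtain ⟨m, rfl⟩ : ∃ m, n = m + 1 := ⟨n - 1, by omega⟩
  rw [unshuffle_replicate, Finset.sum_range_succ, Finset.sum_range_succ']
  have hmid : ∀ k ∈ Finset.range m,
      ((m+1).choose (k+1)) • (wd (K := K) (List.replicate (k+1) c)
        ⊗ₜ[K] wd (K := K) (List.replicate (m+1-(k+1)) c)) = 0 := by
    intro k hk
    have hz := h (k+1) (Nat.succ_pos k) (Nat.succ_lt_succ (Finset.mem_range.1 hk))
    rw [← Nat.cast_smul_eq_nsmul K, hz, zero_smul]
  rw [Finset.sum_eq_zero hmid, zero_add, Nat.choose_zero_right, Nat.choose_self,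
    one_smul, one_smul, Nat.sub_self, Nat.sub_zero, List.replicate_zero, wd_nil, add_comm]

end Alg

/- ### coefficient extraction from primitivity -/

lemma choose_eq_zero_of_primitive {K A : Type*} [CommRing K] {a b : A} (hab : a ≠ b)
    {α β : ℕ} (hα : 0 < α) (hβ : 0 < β)
    (h : IsPrimitive (wd (K := K) (List.replicate α a) - wd (List.replicate β b)))
    {i : ℕ} (h0 : 0 < i) (hi : i < α) : (α.choose i : K) = 0 := by
  classical
  set w := FreeMonoid.ofList (List.replicate i a) with hw
  set w' := FreeMonoid.ofList (List.replicate (α - i) a) with hw'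
  rw [IsPrimitive, map_sub, unshuffle_replicate, unshuffle_replicate] at h
  have h1 : (1 : MonoidAlgebra K (FreeMonoid A)) = wd ([] : List A) := wd_nil.symm
  rw [sub_tmul, tmul_sub, h1] at h
  have h2 := congrArg (coeff2 K w w') h
  rw [map_sub, map_sum, map_sum, map_add, map_sub, map_sub] at h2
  simp only [map_nsmul, coeff2_wd] at h2
  have hiα : 0 < α - i := by omega
  -- first sum evaluates to (α.choose i)
  rw [Finset.sum_eq_single i] at h2
  rotate_left
  · intro k hk hki
    have : ¬ FreeMonoid.ofList (List.replicate k a) = w := fun he => hki (rep_len_eq he)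
    simp [this]
  · intro hmem
    exact absurd (Finset.mem_range.2 (by omega)) hmem
  -- second sum evaluates to 0
  rw [Finset.sum_eq_zero (fun k hk => ?_)] at h2
  swap
  · have : ¬ FreeMonoid.ofList (List.replicate k b) = w := by
      intro he
      have hki : k = i := rep_len_eq he
      exact hab (rep_letter_eq (hki ▸ h0) he).symm
    simp [this]
  -- boundary terms evaluate to 0
  have e1 : ¬ FreeMonoid.ofList ([] : List A) = w' := rep_ne_one hiα
  have e2 : ¬ FreeMonoid.ofList ([] : List A) = w := rep_ne_one h0
  have e3 : ¬ FreeMonoid.ofList (List.replicate β b) = w := by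
    intro he
    exact hab (rep_letter_eq hβ he).symm
  simp only [e1, e2, e3, if_false, mul_zero, zero_mul, if_pos rfl, sub_zero, zero_sub,
    mul_one, sub_self, add_zero] at h2
  -- h2 : (α.choose i) • (1*1) = 0  (up to simp normal form)
  simpa [hw, hw'] using h2

/- ### main theorem -/

/-- over `ℤ/pℤ`, for distinct letters `a ≠ b` and `α, β ≥ 1`,
`a^α − b^β` is primitive iff `α` and `β` are powers of `p`. -/
theorem primitive_diff_powers_iff {A : Type*} (p : ℕ) (hp : p.Prime)
    (a b : A) (hab : a ≠ b) (α β : ℕ) (hα : 0 < α) (hβ : 0 < β) :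
    IsPrimitive (wd (K := ZMod p) (List.replicate α a) - wd (List.replicate β b)) ↔
      (∃ m : ℕ, α = p ^ m) ∧ (∃ n : ℕ, β = p ^ n) := by
  haveI : Fact p.Prime := ⟨hp⟩
  constructor
  · intro h
    have hswap : IsPrimitive (wd (K := ZMod p) (List.replicate β b) - wd (List.replicate α a)) := by
      rw [IsPrimitive] at h ⊢
      have hneg : wd (K := ZMod p) (List.replicate β b) - wd (List.replicate α a)
          = -(wd (K := ZMod p) (List.replicate α a) - wd (List.replicate β b)) := (neg_sub _ _).symm
      rw [hneg, map_neg, h, TensorProduct.neg_tmul, TensorProduct.tmul_neg, neg_add]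
    constructor
    · refine (choose_vanish_iff_pow hp α hα).1 fun i h0 hi => ?_
      have := choose_eq_zero_of_primitive hab hα hβ h h0 hi
      exact (ZMod.natCast_eq_zero_iff _ _).1 this
    · refine (choose_vanish_iff_pow hp β hβ).1 fun i h0 hi => ?_
      have := choose_eq_zero_of_primitive hab.symm hβ hα hswap h0 hi
      exact (ZMod.natCast_eq_zero_iff _ _).1 this
  · rintro ⟨⟨m, hm⟩, ⟨n, hn⟩⟩
    have hva : ∀ i, 0 < i → i < α → ((α.choose i : ZMod p)) = 0 := fun i h0 hi => by
      have : p ∣ α.choose i := by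
        subst hm; exact Nat.Prime.dvd_choose_pow hp h0.ne' hi.ne
      exact (ZMod.natCast_eq_zero_iff _ _).2 this
    have hvb : ∀ i, 0 < i → i < β → ((β.choose i : ZMod p)) = 0 := fun i h0 hi => by
      have : p ∣ β.choose i := by
        subst hn; exact Nat.Prime.dvd_choose_pow hp h0.ne' hi.ne
      exact (ZMod.natCast_eq_zero_iff _ _).2 this
    rw [IsPrimitive, map_sub, unshuffle_replicate_of_vanish a hα hva,
      unshuffle_replicate_of_vanish b hβ hvb, sub_tmul, tmul_sub]
    abel
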